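/- Let A be a (possibly noncommutative) ring, d ≥ 2, and K_1, …, K_d ∈ A with each 1 − K_i a unit. Write R_i := (1 − K_i)⁻¹, K := K_1 + ⋯ + K_d, and P := R_d · R_{d−1} · ⋯ · R_1. Then 1 − P·(1 − K) = P · Σ_{n=2}^{d} (−1)^n Σ_{i_1 < i_2 < ⋯ < i_n} K_{i_1}·K_{i_2}·⋯·K_{i_n}, where the inner sum runs over all strictly increasing index tuples 1 ≤ i_1 < ⋯ < i_n ≤ d and the products K_{i_1}·⋯·K_{i_n} are taken in increasing order of indices. -/

import Mathlib

open Finset in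
private lemma my_powerset_map {α β : Type*} (f : α ↪ β) (s : Finset α) :
    (s.map f).powerset = s.powerset.map (Finset.mapEmbedding f).toEmbedding := by
  ext t
  simp only [mem_powerset, mem_map, RelEmbedding.coe_toEmbedding, Finset.mapEmbedding_apply,
    Finset.subset_map_iff]
  constructor
  · rintro ⟨u, hu, rfl⟩; exact ⟨u, hu, rfl⟩
  · rintro ⟨u, hu, rfl⟩; exact ⟨u, hu, rfl⟩

private lemma my_sort_map {d : ℕ} (t : Finset (Fin d)) :
    ((t.map ⟨Fin.succ, Fin.succ_injective d⟩).sort (· ≤ ·)) =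
      (t.sort (· ≤ ·)).map Fin.succ := by
  refine (fun (hp : List.Perm ((t.map ⟨Fin.succ, Fin.succ_injective d⟩).sort (· ≤ ·)) ((t.sort (· ≤ ·)).map Fin.succ))
      (hs : ((t.sort (· ≤ ·)).map Fin.succ).Pairwise (· ≤ ·)) =>
      List.Perm.eq_of_pairwise' (Finset.pairwise_sort (α := Fin (d+1)) (r := (· ≤ ·)) (s := t.map ⟨Fin.succ, Fin.succ_injective d⟩)) hs hp) ?_ ?_
  · rw [← Multiset.coe_eq_coe, Finset.sort_eq, ← Multiset.map_coe, Finset.sort_eq,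
      Finset.map_val]
    rfl
  · exact List.Pairwise.map Fin.succ (fun a b h => Fin.succ_le_succ_iff.2 h)
      (Finset.pairwise_sort _ _)

private lemma my_expand {A : Type*} [Ring A] :
    ∀ (d : ℕ) (K : Fin d → A),
    (List.ofFn (fun i => 1 - K i)).prod =
      ∑ s ∈ (Finset.univ : Finset (Fin d)).powerset,
        (-1 : A) ^ s.card * ((s.sort (· ≤ ·)).map K).prod := by
  intro d
  induction d with
  | zero => intro K; simp
  | succ d ih =>
    intro K
    have h0 : (0 : Fin (d+1)) ∉ (Finset.univ : Finset (Fin d)).map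
        ⟨Fin.succ, Fin.succ_injective d⟩ := by
      simp [Finset.mem_map]
    rw [List.ofFn_succ, List.prod_cons, ih (fun i => K i.succ)]
    rw [Fin.univ_succ, Finset.cons_eq_insert, Finset.sum_powerset_insert h0]
    rw [my_powerset_map, Finset.sum_map, Finset.sum_map]
    have key1 : ∀ t : Finset (Fin d),
        (-1 : A) ^ ((Finset.mapEmbedding ⟨Fin.succ, Fin.succ_injective d⟩).toEmbedding t).card *
          ((((Finset.mapEmbedding ⟨Fin.succ, Fin.succ_injective d⟩).toEmbedding t).sort
            (· ≤ ·)).map K).prod =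
        (-1 : A) ^ t.card * ((t.sort (· ≤ ·)).map (fun i => K i.succ)).prod := by
      intro t
      simp only [RelEmbedding.coe_toEmbedding, Finset.mapEmbedding_apply,
        Finset.card_map, my_sort_map, List.map_map]
      rfl
    have key2 : ∀ t : Finset (Fin d),
        (-1 : A) ^ (insert (0 : Fin (d+1))
            ((Finset.mapEmbedding ⟨Fin.succ, Fin.succ_injective d⟩).toEmbedding t)).card *
          (((insert (0 : Fin (d+1))
            ((Finset.mapEmbedding ⟨Fin.succ, Fin.succ_injective d⟩).toEmbedding t)).sort
            (· ≤ ·)).map K).prod =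
        -(K 0 * ((-1 : A) ^ t.card *
          ((t.sort (· ≤ ·)).map (fun i => K i.succ)).prod)) := by
      intro t
      have h0t : (0 : Fin (d+1)) ∉ (Finset.mapEmbedding
          ⟨Fin.succ, Fin.succ_injective d⟩).toEmbedding t := by
        simp only [RelEmbedding.coe_toEmbedding, Finset.mapEmbedding_apply]
        simp [Finset.mem_map, Fin.succ_ne_zero, eq_comm]
      rw [Finset.card_insert_of_notMem h0t,
        Finset.sort_insert _ (fun b _ => Fin.zero_le b) h0t]
      simp only [RelEmbedding.coe_toEmbedding, Finset.mapEmbedding_apply, Finset.card_map,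
        List.map_cons, List.prod_cons, my_sort_map, List.map_map]
      rw [pow_succ, mul_neg_one, neg_mul, ← mul_assoc,
        ((Commute.neg_one_left (K 0)).pow_left t.card).eq, mul_assoc]
      rfl
    rw [Finset.sum_congr rfl (fun t _ => key1 t), Finset.sum_congr rfl (fun t _ => key2 t)]
    rw [Finset.sum_neg_distrib, ← Finset.mul_sum]
    rw [sub_mul, one_mul, sub_eq_add_neg]

private lemma my_inv {A : Type*} [Monoid A] :
    ∀ (l : List (A × A)), (∀ p ∈ l, p.1 * p.2 = 1) →
      ((l.map Prod.fst).reverse).prod * (l.map Prod.snd).prod = 1 := by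
  intro l
  induction l with
  | nil => simp
  | cons p t ih =>
    intro h
    simp only [List.map_cons, List.reverse_cons, List.prod_append, List.prod_cons,
      List.prod_nil, mul_one]
    rw [mul_assoc, ← mul_assoc p.1, h p (List.mem_cons_self), one_mul]
    exact ih fun q hq => h q (List.mem_cons_of_mem _ hq)

/-- Alternative form of the quantity `T = 1 − P·(1 − K)` arising in the
decomposition of the resolvent of a sum kernel `K = Σ_{i=1}^d K_i`:
`T = P · Σ_{n=2}^{d} (−1)^n Σ_{i₁<⋯<iₙ} K_{i₁}⋯K_{iₙ}`, where
`P = R_d ⋯ R_1` (decreasing order), `R_i = (1 − K_i)⁻¹`, and the inner sum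
runs over strictly increasing index tuples, products taken in increasing
order of indices. -/
theorem stmt_8 {A : Type*} [Ring A] (d : ℕ) (hd : 2 ≤ d) (K : Fin d → A)
    (hKi : ∀ i, IsUnit (1 - K i))
    (R : Fin d → A) (hR : ∀ i, R i = Ring.inverse (1 - K i))
    (P : A) (hP : P = ((List.ofFn R).reverse).prod) :
    1 - P * (1 - ∑ i, K i) =
      P * ∑ n ∈ Finset.Icc 2 d, (-1 : A) ^ n *
        ∑ s ∈ Finset.powersetCard n (Finset.univ : Finset (Fin d)),
          ((s.sort (· ≤ ·)).map K).prod := by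
  have hPQ : P * (List.ofFn (fun i => 1 - K i)).prod = 1 := by
    have hfst : (List.ofFn (fun i => (R i, 1 - K i))).map Prod.fst = List.ofFn R := by
      rw [List.map_ofFn]; rfl
    have hsnd : (List.ofFn (fun i => (R i, 1 - K i))).map Prod.snd =
        List.ofFn (fun i => 1 - K i) := by
      rw [List.map_ofFn]; rfl
    have := my_inv (List.ofFn (fun i => (R i, 1 - K i))) (by
      intro p hp
      rw [List.mem_ofFn] at hp
      obtain ⟨i, rfl⟩ := hp
      show R i * (1 - K i) = 1
      rw [hR i]
      exact Ring.inverse_mul_cancel _ (hKi i))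
    rw [hfst, hsnd, ← hP] at this
    exact this
  have key : 1 - P * (1 - ∑ i, K i) =
      P * ((List.ofFn fun i => 1 - K i).prod - (1 - ∑ i, K i)) := by
    conv_rhs => rw [mul_sub, hPQ]
  rw [key, my_expand d K]
  congr 1
  rw [Finset.sum_powerset, Finset.card_univ, Fintype.card_fin]
  have hinner : ∀ n, ∑ s ∈ Finset.powersetCard n (Finset.univ : Finset (Fin d)),
      (-1:A)^s.card * ((s.sort (· ≤ ·)).map K).prod
      = (-1:A)^n * ∑ s ∈ Finset.powersetCard n (Finset.univ : Finset (Fin d)),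
          ((s.sort (· ≤ ·)).map K).prod := by
    intro n
    rw [Finset.mul_sum]
    refine Finset.sum_congr rfl fun s hs => ?_
    rw [(Finset.mem_powersetCard.1 hs).2]
  simp_rw [hinner]
  have hsplit : Finset.range (d+1) = insert 0 (insert 1 (Finset.Icc 2 d)) := by
    ext n; simp only [Finset.mem_range, Finset.mem_insert, Finset.mem_Icc]; omega
  rw [hsplit, Finset.sum_insert (by simp), Finset.sum_insert (by simp)]
  rw [Finset.powersetCard_zero, Finset.powersetCard_one, Finset.sum_singleton, Finset.sum_map]
  simp only [Finset.sort_empty, List.map_nil, List.prod_nil, pow_zero, one_mul, pow_one,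
    Function.Embedding.coeFn_mk, Finset.sort_singleton, List.map_cons,
    List.prod_cons, List.prod_nil, mul_one, neg_one_mul]
  abel
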